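/- If (G, ≡, -1) is a special group, then M(G) = G ∪ {0}, with product extending that of G (and a·0 = 0), negation -a = (-1)·a, and multivalued sum a+0 = {a}, 0+b = {b}, a+(-a) = M(G) for a ≠ 0, and a+b = D_G(a,b) otherwise, is a hyperfield. -/

import Mathlib

/-- A multiring structure (multivalued addition) on a carrier `R`. -/
structure MulRingOps (R : Type*) where
  add : R → R → Set R
  mul : R → R → R
  neg : R → R
  zero : R
  one : R

namespace MulRingOps

variable {R : Type*}

/-- The multiring axioms. -/
structure IsMulRing (S : MulRingOps R) : Prop where
  add_nonempty : ∀ a b, (S.add a b).Nonempty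
  add_comm : ∀ a b, S.add a b = S.add b a
  rev_left : ∀ {x y z}, z ∈ S.add x y → x ∈ S.add z (S.neg y)
  rev_right : ∀ {x y z}, z ∈ S.add x y → y ∈ S.add (S.neg x) z
  zero_add : ∀ x y, y ∈ S.add S.zero x ↔ x = y
  add_assoc : ∀ x y z : R,
    (⋃ w ∈ S.add y z, S.add x w) = (⋃ t ∈ S.add x y, S.add t z)
  mul_comm : ∀ a b, S.mul a b = S.mul b a
  mul_assoc : ∀ a b c, S.mul (S.mul a b) c = S.mul a (S.mul b c)
  one_mul : ∀ a, S.mul S.one a = a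
  mul_zero : ∀ a, S.mul a S.zero = S.zero
  distrib : ∀ {a b c : R} (d : R), c ∈ S.add a b →
    S.mul c d ∈ S.add (S.mul a d) (S.mul b d)

/-- A hyperfield: a multiring with `0 ≠ 1` in which every nonzero element is invertible. -/
structure IsHyperfield (S : MulRingOps R) extends IsMulRing S : Prop where
  zero_ne_one : S.zero ≠ S.one
  exists_inv : ∀ a, a ≠ S.zero → ∃ b, S.mul a b = S.one

/-- A hyperfield is hyperbolic when `1 - 1` is everything. -/
def IsHyperbolic (S : MulRingOps R) : Prop :=
  S.add S.one (S.neg S.one) = Set.univ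

/-- Morphisms of multirings. -/
def IsHom {A B : Type*} (S : MulRingOps A) (T : MulRingOps B) (f : A → B) : Prop :=
  (∀ {a b c}, c ∈ S.add a b → f c ∈ T.add (f a) (f b)) ∧
  (∀ a, f (S.neg a) = T.neg (f a)) ∧
  f S.zero = T.zero ∧
  (∀ a b, f (S.mul a b) = T.mul (f a) (f b)) ∧
  f S.one = T.one

end MulRingOps

/-- The data of a (pre-)special group structure on an exponent-2 group `G`:
the distinguished element `-1` and the binary relation `≡` on `G × G`
(`rel a b c d` means `⟨a,b⟩ ≡ ⟨c,d⟩`). -/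
structure SpecialGroupOps (G : Type*) [CommGroup G] where
  m1 : G
  rel : G → G → G → G → Prop

namespace SpecialGroupOps

variable {G : Type*} [CommGroup G]

/-- The extension of `≡` to triples: `⟨a₁,a₂,a₃⟩ ≡₃ ⟨b₁,b₂,b₃⟩` iff there are `x,y,z` with
`⟨a₁,x⟩ ≡ ⟨b₁,y⟩`, `⟨a₂,a₃⟩ ≡ ⟨x,z⟩` and `⟨b₂,b₃⟩ ≡ ⟨y,z⟩`. -/
def rel3 (Sp : SpecialGroupOps G) (a₁ a₂ a₃ b₁ b₂ b₃ : G) : Prop :=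
  ∃ x y z, Sp.rel a₁ x b₁ y ∧ Sp.rel a₂ a₃ x z ∧ Sp.rel b₂ b₃ y z

/-- The special group axioms SG0–SG6 (with `-a := (-1)·a`). -/
structure IsSpecialGroup (Sp : SpecialGroupOps G) : Prop where
  exp2 : ∀ g : G, g * g = 1
  refl : ∀ a b, Sp.rel a b a b
  symm : ∀ {a b c d}, Sp.rel a b c d → Sp.rel c d a b
  trans : ∀ {a b c d e f}, Sp.rel a b c d → Sp.rel c d e f → Sp.rel a b e f
  sg1 : ∀ a b, Sp.rel a b b a
  sg2 : ∀ a, Sp.rel a (Sp.m1 * a) 1 Sp.m1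
  sg3 : ∀ {a b c d}, Sp.rel a b c d → a * b = c * d
  sg4 : ∀ {a b c d}, Sp.rel a b c d → Sp.rel a (Sp.m1 * c) (Sp.m1 * b) d
  sg5 : ∀ {a b c d} (g : G), Sp.rel a b c d → Sp.rel (g * a) (g * b) (g * c) (g * d)
  sg6 : ∀ {a₁ a₂ a₃ b₁ b₂ b₃ c₁ c₂ c₃ : G},
    rel3 Sp a₁ a₂ a₃ b₁ b₂ b₃ → rel3 Sp b₁ b₂ b₃ c₁ c₂ c₃ → rel3 Sp a₁ a₂ a₃ c₁ c₂ c₃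

/-- The representation set `D_G(a,b) = {x : ∃ y, ⟨x,y⟩ ≡ ⟨a,b⟩}`. -/
def DG (Sp : SpecialGroupOps G) (a b : G) : Set G :=
  {x | ∃ y, Sp.rel x y a b}

open Classical in
/-- The multiring operations of `M(G) = G ∪ {0}` (with `none` playing the role of `0`):
`a+0 = {a}`, `0+b = {b}`, `a+(-a) = M(G)` for `a ≠ 0`, and `a+b = D_G(a,b)` otherwise. -/
noncomputable def mOps (Sp : SpecialGroupOps G) : MulRingOps (Option G) where
  add x y :=
    match x, y with
    | none, y => {y}
    | x, none => {x}
    | some a, some b => if b = Sp.m1 * a then Set.univ else some '' DG Sp a b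
  mul x y :=
    match x, y with
    | some a, some b => some (a * b)
    | _, _ => none
  neg := Option.map (Sp.m1 * ·)
  zero := none
  one := some 1

section Aux

variable {G : Type*} [CommGroup G] {Sp : SpecialGroupOps G}

lemma sg_neg_neg (h : Sp.IsSpecialGroup) (a : G) : Sp.m1 * (Sp.m1 * a) = a := by
  rw [← mul_assoc, h.exp2, one_mul]

lemma dg_swap (h : Sp.IsSpecialGroup) {a b x : G} (hx : x ∈ DG Sp a b) : x ∈ DG Sp b a := by
  obtain ⟨y, hy⟩ := hx
  exact ⟨y, h.trans hy (h.sg1 a b)⟩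

lemma dg_self (h : Sp.IsSpecialGroup) (a b : G) : a ∈ DG Sp a b := ⟨b, h.refl a b⟩

lemma dg_right_self (h : Sp.IsSpecialGroup) (a x : G) : x ∈ DG Sp a x := ⟨a, h.sg1 x a⟩

lemma dg_neg_univ (h : Sp.IsSpecialGroup) (a : G) : DG Sp a (Sp.m1 * a) = Set.univ := by
  ext x
  simp only [Set.mem_univ, iff_true]
  exact ⟨Sp.m1 * x, h.trans (h.sg2 x) (h.symm (h.sg2 a))⟩

/-- If `c ∈ D(a,b)` then `a ∈ D(c,-b)`. -/
lemma dg_rev (h : Sp.IsSpecialGroup) {a b c : G} (hc : c ∈ DG Sp a b) :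
    a ∈ DG Sp c (Sp.m1 * b) := by
  obtain ⟨w, hw⟩ := hc
  have h2 := h.sg4 (h.symm hw)
  have h3 := h.trans h2 (h.sg1 (Sp.m1 * b) w)
  have h4 := h.sg4 h3
  rw [sg_neg_neg h] at h4
  exact ⟨Sp.m1 * w, h4⟩

/-- If `-a ∈ D(b,c)` then `-c ∈ D(a,b)`. -/
lemma dg_neg_shift (h : Sp.IsSpecialGroup) {a b c : G} (ha : Sp.m1 * a ∈ DG Sp b c) :
    Sp.m1 * c ∈ DG Sp a b := by
  obtain ⟨y, hy⟩ := ha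
  have h2 := h.sg4 (h.symm hy)
  rw [sg_neg_neg h] at h2
  exact ⟨y, h.symm (h.trans (h.sg1 a b) h2)⟩

lemma rel3_of (h : Sp.IsSpecialGroup) {x y z a b c d : G}
    (h1 : Sp.rel x y a d) (h2 : Sp.rel d z b c) : Sp.rel3 x y z a b c :=
  ⟨y, d, z, h1, h.refl y z, h.symm h2⟩

lemma rel3_dest (h : Sp.IsSpecialGroup) {x α β a b c : G} (hr : Sp.rel3 x α β a b c) :
    ∃ d ∈ DG Sp b c, x ∈ DG Sp a d := by
  obtain ⟨X, Y, Z, h1, _, h3⟩ := hr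
  exact ⟨Y, ⟨Z, h.symm h3⟩, ⟨X, h1⟩⟩

lemma rel3_rev (h : Sp.IsSpecialGroup) (a b c : G) : Sp.rel3 a b c c b a :=
  ⟨c, a, b, h.sg1 a c, h.sg1 b c, h.sg1 b a⟩

lemma rel3_swap23 (h : Sp.IsSpecialGroup) (a b c : G) : Sp.rel3 a b c a c b :=
  ⟨b, b, c, h.refl a b, h.refl b c, h.sg1 c b⟩

lemma rel3_cycle (h : Sp.IsSpecialGroup) (a b c : G) : Sp.rel3 a b c c a b :=
  h.sg6 (rel3_rev h a b c) (rel3_swap23 h c b a)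

lemma rel3_cycle2 (h : Sp.IsSpecialGroup) (a b c : G) : Sp.rel3 a b c b c a :=
  h.sg6 (rel3_cycle h a b c) (rel3_cycle h c a b)

/-- Core associativity for representation sets. -/
lemma dg_assoc (h : Sp.IsSpecialGroup) (a b c x : G) :
    (∃ d ∈ DG Sp b c, x ∈ DG Sp a d) ↔ (∃ e ∈ DG Sp a b, x ∈ DG Sp e c) := by
  constructor
  · rintro ⟨d, ⟨z, hz⟩, ⟨y, hy⟩⟩
    have hr : Sp.rel3 x y z a b c := rel3_of h hy hz
    obtain ⟨e, he, hx⟩ := rel3_dest h (h.sg6 hr (rel3_cycle h a b c))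
    exact ⟨e, he, dg_swap h hx⟩
  · rintro ⟨e, ⟨z, hz⟩, hx⟩
    obtain ⟨y, hy⟩ := dg_swap h hx
    have hr : Sp.rel3 x y z c a b := rel3_of h hy hz
    exact rel3_dest h (h.sg6 hr (rel3_cycle2 h c a b))

lemma add_none_left (y : Option G) : (mOps Sp).add none y = {y} := by
  cases y <;> rfl

lemma add_none_right (x : Option G) : (mOps Sp).add x none = {x} := by
  cases x <;> rfl

open Classical in
lemma add_some_some (a b : G) : (mOps Sp).add (some a) (some b) =
    if b = Sp.m1 * a then Set.univ else some '' DG Sp a b := rfl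

lemma some_mem_add (h : Sp.IsSpecialGroup) {a b x : G} :
    some x ∈ (mOps Sp).add (some a) (some b) ↔ x ∈ DG Sp a b := by
  rw [add_some_some]
  split_ifs with hb
  · subst hb
    simp [dg_neg_univ h]
  · simp

lemma none_mem_add {a b : G} :
    (none : Option G) ∈ (mOps Sp).add (some a) (some b) ↔ b = Sp.m1 * a := by
  rw [add_some_some]
  split_ifs with hb
  · simp [hb]
  · simp [hb]

end Aux

end SpecialGroupOps

open SpecialGroupOps in
/-- if `(G, ≡, -1)` is a special group then `M(G) = G ∪ {0}` is a hyperfield. -/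
theorem mG_isHyperfield {G : Type*} [CommGroup G] (Sp : SpecialGroupOps G)
    (h : IsSpecialGroup Sp) : (mOps Sp).IsHyperfield := by
  have memcases : ∀ {a b : G} {u : Option G}, u ∈ (mOps Sp).add (some a) (some b) →
      (u = none ∧ b = Sp.m1 * a) ∨ ∃ x, u = some x ∧ x ∈ DG Sp a b := by
    intro a b u hu
    cases u with
    | none => exact Or.inl ⟨rfl, none_mem_add.mp hu⟩
    | some x => exact Or.inr ⟨x, rfl, (some_mem_add h).mp hu⟩
  have hcomm : ∀ a b, (mOps Sp).add a b = (mOps Sp).add b a := by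
    intro a b
    cases a with
    | none => rw [add_none_left, add_none_right]
    | some a =>
      cases b with
      | none => rw [add_none_left, add_none_right]
      | some b =>
        ext u
        cases u with
        | none =>
          rw [none_mem_add, none_mem_add]
          constructor
          · rintro rfl; rw [sg_neg_neg h]
          · rintro rfl; rw [sg_neg_neg h]
        | some x =>
          rw [some_mem_add h, some_mem_add h]
          exact ⟨dg_swap h, dg_swap h⟩
  have hrevl : ∀ {x y z : Option G}, z ∈ (mOps Sp).add x y →
      x ∈ (mOps Sp).add z ((mOps Sp).neg y) := by
    intro x y z hz
    cases x with
    | none =>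
      rw [add_none_left, Set.mem_singleton_iff] at hz
      subst hz
      cases z with
      | none => exact rfl
      | some b => exact none_mem_add.mpr rfl
    | some a =>
      cases y with
      | none =>
        rw [add_none_right, Set.mem_singleton_iff] at hz
        subst hz
        rw [show (mOps Sp).neg none = none from rfl, add_none_right]
        rfl
      | some b =>
        rcases memcases hz with ⟨rfl, rfl⟩ | ⟨c, rfl, hc⟩
        · rw [show (mOps Sp).neg (some (Sp.m1 * a)) = some (Sp.m1 * (Sp.m1 * a)) from rfl,
            sg_neg_neg h, add_none_left]
          rfl
        · exact (some_mem_add h).mpr (dg_rev h hc)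
  refine ⟨⟨?_, hcomm, @hrevl, ?_, ?_, ?_, ?_, ?_, ?_, ?_, ?_⟩, ?_, ?_⟩
  · -- add_nonempty
    intro a b
    cases a with
    | none => exact ⟨b, by cases b <;> exact rfl⟩
    | some a =>
      cases b with
      | none => exact ⟨some a, rfl⟩
      | some b => exact ⟨some a, (some_mem_add h).mpr (dg_self h a b)⟩
  · -- rev_right
    intro x y z hz
    rw [hcomm] at hz
    rw [hcomm]
    exact hrevl hz
  · -- zero_add
    intro x y
    show y ∈ (mOps Sp).add none x ↔ x = y
    rw [add_none_left, Set.mem_singleton_iff, eq_comm]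
  · -- add_assoc
    intro x y z
    cases x with
    | none =>
      simp only [add_none_left, Set.biUnion_singleton, Set.biUnion_of_singleton]
    | some a =>
      cases y with
      | none =>
        simp only [add_none_left, add_none_right, Set.biUnion_singleton]
      | some b =>
        cases z with
        | none =>
          simp only [add_none_right, Set.biUnion_singleton, Set.biUnion_of_singleton]
        | some c =>
          ext u
          simp only [Set.mem_iUnion, exists_prop]
          constructor
          · rintro ⟨w, hw, hu⟩
            rcases memcases hw with ⟨rfl, rfl⟩ | ⟨d, rfl, hd⟩
            · -- w = none, c = -b
              rw [add_none_right, Set.mem_singleton_iff] at hu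
              subst hu
              exact ⟨some a, (some_mem_add h).mpr (dg_self h a b),
                (some_mem_add h).mpr (dg_self h a (Sp.m1 * b))⟩
            · -- w = some d with d ∈ D(b,c)
              rcases memcases hu with ⟨rfl, rfl⟩ | ⟨x, rfl, hx⟩
              · -- u = none, d = -a, so -a ∈ D(b,c); need -c ∈ D(a,b)
                exact ⟨some (Sp.m1 * c), (some_mem_add h).mpr (dg_neg_shift h hd),
                  none_mem_add.mpr (sg_neg_neg h c).symm⟩
              · obtain ⟨e, he, hxe⟩ := (dg_assoc h a b c x).mp ⟨d, hd, hx⟩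
                exact ⟨some e, (some_mem_add h).mpr he, (some_mem_add h).mpr hxe⟩
          · rintro ⟨t, ht, hu⟩
            rcases memcases ht with ⟨rfl, rfl⟩ | ⟨e, rfl, he⟩
            · -- t = none, b = -a
              rw [add_none_left, Set.mem_singleton_iff] at hu
              subst hu
              refine ⟨some (Sp.m1 * a), (some_mem_add h).mpr (dg_self h (Sp.m1 * a) c),
                (some_mem_add h).mpr ?_⟩
              rw [dg_neg_univ h]
              trivial
            · rcases memcases hu with ⟨rfl, rfl⟩ | ⟨x, rfl, hx⟩
              · -- u = none, c = -e, so -c = e ∈ D(a,b); need -a ∈ D(b,c)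
                have he' : Sp.m1 * (Sp.m1 * e) ∈ DG Sp a b := by
                  rwa [sg_neg_neg h]
                have := dg_neg_shift h (dg_neg_shift h he')
                exact ⟨some (Sp.m1 * a), (some_mem_add h).mpr this,
                  none_mem_add.mpr rfl⟩
              · obtain ⟨d, hd, hxd⟩ := (dg_assoc h a b c x).mpr ⟨e, he, hx⟩
                exact ⟨some d, (some_mem_add h).mpr hd, (some_mem_add h).mpr hxd⟩
  · -- mul_comm
    intro a b
    cases a <;> cases b <;> simp [mOps, mul_comm]
  · -- mul_assoc
    intro a b c
    cases a <;> cases b <;> cases c <;> simp [mOps, mul_assoc]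
  · -- one_mul
    intro a
    cases a <;> simp [mOps]
  · -- mul_zero
    intro a
    cases a <;> rfl
  · -- distrib
    intro a b c d hc
    cases d with
    | none =>
      have : ∀ u : Option G, (mOps Sp).mul u none = none := by
        intro u; cases u <;> rfl
      rw [this, this, this, add_none_left]
      rfl
    | some g =>
      cases a with
      | none =>
        rw [add_none_left, Set.mem_singleton_iff] at hc
        subst hc
        rw [show (mOps Sp).mul none (some g) = none from rfl, add_none_left]
        rfl
      | some a =>
        cases b with
        | none =>
          rw [add_none_right, Set.mem_singleton_iff] at hc
          subst hc
          rw [show (mOps Sp).mul none (some g) = none from rfl, add_none_right]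
          rfl
        | some b =>
          rcases memcases hc with ⟨rfl, rfl⟩ | ⟨e, rfl, he⟩
          · refine none_mem_add.mpr ?_
            rw [mul_assoc]
          · refine (some_mem_add h).mpr ?_
            obtain ⟨y, hy⟩ := he
            refine ⟨y * g, ?_⟩
            have := h.sg5 g hy
            simpa [mul_comm] using this
  · -- zero_ne_one
    exact fun hh => Option.some_ne_none (1 : G) hh.symm
  · -- exists_inv
    intro a ha
    cases a with
    | none => exact absurd rfl ha
    | some g =>
      exact ⟨some g, by simp [mOps, h.exp2 g]⟩
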